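/- Let n ≥ 2, d ≥ 2, and t₁, …, t_d be integers such that the numerical nearly-Gorenstein criterion holds (for every 0 < i < d, every permutation σ, and every positive integers a₁,…,a_i with Σ a_j ≤ n and Σ a_j t_{σ(j)} ≡ 0 (mod n), there exist 0 < b_j ≤ a_j + 1 with Σ b_j t_{σ(j)} ≡ −Σ_{k=i+1}^{d} t_{σ(k)} (mod n)). Suppose that for some i > 0 and some permutation σ one has gcd(t_{σ(1)}, …, t_{σ(i)}, n) = m > 1. Then t_{σ(i+1)} + ⋯ + t_{σ(d)} ≡ 0 (mod m). -/

import Mathlib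

/-- Remark 2.8 of the paper: if the numerical nearly-Gorenstein criterion holds
for `1/n(t₁,…,t_d)` and `gcd(t_{σ(1)}, …, t_{σ(i)}, n) = m > 1`, then
`t_{σ(i+1)} + ⋯ + t_{σ(d)} ≡ 0 (mod m)`. -/
theorem stmt_8 (n : ℤ) (hn : 2 ≤ n) (d : ℕ) (hd : 2 ≤ d) (t : Fin d → ℤ)
    (hcrit : ∀ i : ℕ, 0 < i → i < d → ∀ σ : Equiv.Perm (Fin d), ∀ a : Fin d → ℤ,
      (∀ j : Fin d, (j : ℕ) < i → 0 < a j) →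
      (∑ j ∈ Finset.univ.filter (fun j : Fin d => (j : ℕ) < i), a j) ≤ n →
      (∑ j ∈ Finset.univ.filter (fun j : Fin d => (j : ℕ) < i), a j * t (σ j))
          ≡ 0 [ZMOD n] →
      ∃ b : Fin d → ℤ,
        (∀ j : Fin d, (j : ℕ) < i → 0 < b j ∧ b j ≤ a j + 1) ∧
        (∑ j ∈ Finset.univ.filter (fun j : Fin d => (j : ℕ) < i), b j * t (σ j))
          ≡ -(∑ k ∈ Finset.univ.filter (fun k : Fin d => i ≤ (k : ℕ)), t (σ k))
            [ZMOD n])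
    (i : ℕ) (hi0 : 0 < i) (hid : i < d) (σ : Equiv.Perm (Fin d)) (m : ℕ)
    (hm : 1 < m)
    (hgcd : Int.gcd
      ((Finset.univ.filter (fun j : Fin d => (j : ℕ) < i)).gcd (fun j => t (σ j)))
      n = m) :
    (∑ k ∈ Finset.univ.filter (fun k : Fin d => i ≤ (k : ℕ)), t (σ k))
      ≡ 0 [ZMOD (m : ℤ)] := by
  have hd0 : 0 < d := by omega
  set z : Fin d := ⟨0, hd0⟩ with hz
  have hfilt : Finset.univ.filter (fun j : Fin d => (j : ℕ) < 1) = {z} := by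
    ext j
    simp only [Finset.mem_filter, Finset.mem_univ, true_and, Finset.mem_singleton, hz,
      Fin.ext_iff]
    omega
  -- divisibility facts coming from the gcd hypothesis
  have hmn : (m : ℤ) ∣ n := by
    rw [← hgcd]; exact Int.gcd_dvd_right _ _
  have hmt : ∀ j : Fin d, (j : ℕ) < i → (m : ℤ) ∣ t (σ j) := by
    intro j hj
    have h2 : (Finset.univ.filter (fun j : Fin d => (j : ℕ) < i)).gcd (fun j => t (σ j))
        ∣ t (σ j) := Finset.gcd_dvd (by simp [hj])
    have h1 : (m : ℤ) ∣
        (Finset.univ.filter (fun j : Fin d => (j : ℕ) < i)).gcd (fun j => t (σ j)) := by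
      rw [← hgcd]; exact Int.gcd_dvd_left _ _
    exact h1.trans h2
  -- apply the criterion with i' = 1 and a₁ = n
  obtain ⟨b, hb, hcong⟩ := hcrit 1 one_pos (by omega) σ (fun _ => n)
    (fun j _ => by show (0:ℤ) < n; omega)
    (by rw [hfilt, Finset.sum_singleton])
    (by
      rw [hfilt, Finset.sum_singleton]
      exact Int.modEq_zero_iff_dvd.mpr ⟨t (σ z), rfl⟩)
  rw [hfilt, Finset.sum_singleton] at hcong
  -- reduce the congruence mod m
  have hcongm := Int.ModEq.of_dvd hmn hcong
  have hS1 : (m : ℤ) ∣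
      (∑ k ∈ Finset.univ.filter (fun k : Fin d => 1 ≤ (k : ℕ)), t (σ k)) := by
    have hdd := Int.ModEq.dvd hcongm
    have h4 : (m : ℤ) ∣ b z * t (σ z) := Dvd.dvd.mul_left (hmt z hi0) (b z)
    have h5 : (m : ℤ) ∣
        -(∑ k ∈ Finset.univ.filter (fun k : Fin d => 1 ≤ (k : ℕ)), t (σ k)) := by
      have := dvd_add hdd h4
      simpa using this
    exact (dvd_neg).mp h5
  -- split the sum over k ≥ 1 into 1 ≤ k < i and k ≥ i
  have hsplit :
      (∑ k ∈ (Finset.univ.filter (fun k : Fin d => 1 ≤ (k : ℕ))).filter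
          (fun k : Fin d => (k : ℕ) < i), t (σ k))
        + (∑ k ∈ (Finset.univ.filter (fun k : Fin d => 1 ≤ (k : ℕ))).filter
          (fun k : Fin d => ¬ (k : ℕ) < i), t (σ k))
      = (∑ k ∈ Finset.univ.filter (fun k : Fin d => 1 ≤ (k : ℕ)), t (σ k)) :=
    Finset.sum_filter_add_sum_filter_not _ _ _
  have hfilt2 : (Finset.univ.filter (fun k : Fin d => 1 ≤ (k : ℕ))).filter
      (fun k : Fin d => ¬ (k : ℕ) < i)
      = Finset.univ.filter (fun k : Fin d => i ≤ (k : ℕ)) := by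
    ext k
    simp only [Finset.mem_filter, Finset.mem_univ, true_and]
    omega
  rw [hfilt2] at hsplit
  have hmid : (m : ℤ) ∣
      (∑ k ∈ (Finset.univ.filter (fun k : Fin d => 1 ≤ (k : ℕ))).filter
          (fun k : Fin d => (k : ℕ) < i), t (σ k)) := by
    refine Finset.dvd_sum ?_
    intro k hk
    simp only [Finset.mem_filter, Finset.mem_univ, true_and] at hk
    exact hmt k hk.2
  refine Int.modEq_zero_iff_dvd.mpr ?_
  have : (∑ k ∈ Finset.univ.filter (fun k : Fin d => i ≤ (k : ℕ)), t (σ k))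
      = (∑ k ∈ Finset.univ.filter (fun k : Fin d => 1 ≤ (k : ℕ)), t (σ k))
        - (∑ k ∈ (Finset.univ.filter (fun k : Fin d => 1 ≤ (k : ℕ))).filter
          (fun k : Fin d => (k : ℕ) < i), t (σ k)) := by omega
  rw [this]
  exact dvd_sub hS1 hmid
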